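/- Let P_n = U(F^n). Then P_{n+4} + F^4·P_n + F·P_{n+1} = 0 for all n ≥ 0. The same recurrence holds with P_n = G^n. -/
import Mathlib


open Polynomial

noncomputable def Fp : Polynomial (ZMod 2) := X * (X + 1) ^ 3

noncomputable def Gp : Polynomial (ZMod 2) := X ^ 3 * (X + 1)

lemma two_eq_zero : (2 : Polynomial (ZMod 2)) = 0 := by
  exact_mod_cast CharP.cast_eq_zero (Polynomial (ZMod 2)) 2

lemma key : Fp ^ 4 = Gp ^ 4 + Fp * Gp := by
  unfold Fp Gp
  linear_combination (4 * X ^ 5 + 30 * X ^ 6 + 108 * X ^ 7 + 247 * X ^ 8 +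
    396 * X ^ 9 + 462 * X ^ 10 + 396 * X ^ 11 + 247 * X ^ 12 + 108 * X ^ 13 +
    30 * X ^ 14 + 4 * X ^ 15 : Polynomial (ZMod 2)) * two_eq_zero

theorem stmt11 (U : Polynomial (ZMod 2) →ₗ[ZMod 2] Polynomial (ZMod 2))
    (hsemi : ∀ f, U (Gp * f) = Fp * U f)
    (h0 : U 1 = 1) (h1 : U X = X) (h2 : U (X ^ 2) = X ^ 2)
    (h3 : U (X ^ 3) = X ^ 3 + X ^ 2 + X) :
    ∀ n : ℕ,
      U (Fp ^ (n + 4)) + Fp ^ 4 * U (Fp ^ n) + Fp * U (Fp ^ (n + 1)) = 0 ∧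
      Gp ^ (n + 4) + Fp ^ 4 * Gp ^ n + Fp * Gp ^ (n + 1) = 0 := by
  intro n
  constructor
  · have e1 : Fp ^ (n + 4) = Gp * (Gp * (Gp * (Gp * Fp ^ n))) + Gp * Fp ^ (n + 1) := by
      have : Fp ^ (n + 4) = Fp ^ 4 * Fp ^ n := by ring
      rw [this, key]; ring
    rw [e1, map_add, hsemi, hsemi, hsemi, hsemi, hsemi]
    have : (Fp * (Fp * (Fp * (Fp * U (Fp ^ n))))) = Fp ^ 4 * U (Fp ^ n) := by ring
    rw [this]
    linear_combination (Fp ^ 4 * U (Fp ^ n) + Fp * U (Fp ^ (n + 1))) * two_eq_zero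
  · have e1 : Gp ^ (n + 4) = Fp ^ 4 * Gp ^ n + Fp * Gp ^ (n + 1) := by
      have : Gp ^ (n + 4) = Gp ^ 4 * Gp ^ n := by ring
      rw [this]
      linear_combination Gp ^ n * key.symm - Gp ^ n * Fp * Gp * two_eq_zero
    rw [e1]
    linear_combination (Fp ^ 4 * Gp ^ n + Fp * Gp ^ (n + 1)) * two_eq_zero
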